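/- arXiv:1407.4595 — 3 statements merged into one kernel-verified Lean document; each statement's English description precedes it below -/
import Mathlib

section
/- Let $R$ be a commutative ring, $1 \leq \tau$, and define on the free $R$-module with basis $\{T^a\}_{a \in \mathbb{N}}$ a bilinear multiplication by $T^a * T^b = \tau T^{a+b} + T^{a+b+1}$ if both $a$ and $b$ are odd, and $T^a * T^b = T^{a+b}$ otherwise (where $\tau$ is regarded as an element of $R$). Then this multiplication is associative and $T^0$ is a two-sided identity, making $R[T]^\tau$ into an associative unital $R$-algebra. -/
open Finsupp

noncomputable def tmul (R : Type) [CommRing R] (τ : R) (f g : ℕ →₀ R) : ℕ →₀ R :=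
  f.sum fun a ra => g.sum fun b rb =>
    (ra * rb) • (if Odd a ∧ Odd b then
        τ • Finsupp.single (a + b) (1 : R) + Finsupp.single (a + b + 1) (1 : R)
      else Finsupp.single (a + b) (1 : R))

section aux
variable (R : Type) [CommRing R] (τ : R)

lemma tmul_single_single (a b : ℕ) (r s : R) :
    tmul R τ (single a r) (single b s)
      = (r * s) • (if Odd a ∧ Odd b then
          τ • Finsupp.single (a + b) (1 : R) + Finsupp.single (a + b + 1) (1 : R)
        else Finsupp.single (a + b) (1 : R)) := by
  unfold tmul
  rw [Finsupp.sum_single_index, Finsupp.sum_single_index] <;> simp [Finsupp.sum_single_index]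

lemma tmul_zero_left (g : ℕ →₀ R) : tmul R τ 0 g = 0 := by
  simp [tmul]

lemma tmul_zero_right (f : ℕ →₀ R) : tmul R τ f 0 = 0 := by
  simp [tmul]

lemma tmul_add_left (f g h : ℕ →₀ R) :
    tmul R τ (f + g) h = tmul R τ f h + tmul R τ g h := by
  unfold tmul
  rw [Finsupp.sum_add_index]
  · simp
  · intro a _ b₁ b₂
    rw [← Finsupp.sum_add]
    refine Finsupp.sum_congr fun b _ => ?_
    simp only [add_mul, add_smul]

lemma tmul_add_right (f g h : ℕ →₀ R) :
    tmul R τ f (g + h) = tmul R τ f g + tmul R τ f h := by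
  unfold tmul
  rw [← Finsupp.sum_add]
  apply Finsupp.sum_congr
  intro a _
  rw [Finsupp.sum_add_index]
  · simp
  · intro b _ c₁ c₂
    simp only [mul_add, add_smul]

lemma tmul_smul_left (r : R) (f g : ℕ →₀ R) :
    tmul R τ (r • f) g = r • tmul R τ f g := by
  unfold tmul
  rw [Finsupp.sum_smul_index]
  · rw [Finsupp.smul_sum]
    apply Finsupp.sum_congr
    intro a _
    rw [Finsupp.smul_sum]
    apply Finsupp.sum_congr
    intro b _
    rw [smul_smul]; ring_nf
  · simp

lemma tmul_smul_right (r : R) (f g : ℕ →₀ R) :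
    tmul R τ f (r • g) = r • tmul R τ f g := by
  unfold tmul
  rw [Finsupp.smul_sum]
  apply Finsupp.sum_congr
  intro a _
  rw [Finsupp.sum_smul_index]
  · rw [Finsupp.smul_sum]
    apply Finsupp.sum_congr
    intro b _
    rw [smul_smul]; ring_nf
  · simp

end aux

section aux2
variable (R : Type) [CommRing R] (τ : R)

lemma tmul_one_left (f : ℕ →₀ R) : tmul R τ (single 0 (1:R)) f = f := by
  unfold tmul
  rw [Finsupp.sum_single_index]
  · conv_rhs => rw [← Finsupp.sum_single f]
    refine Finsupp.sum_congr fun b _ => ?_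
    simp [Finsupp.smul_single]
  · simp

lemma tmul_one_right (f : ℕ →₀ R) : tmul R τ f (single 0 (1:R)) = f := by
  unfold tmul
  conv_rhs => rw [← Finsupp.sum_single f]
  refine Finsupp.sum_congr fun a _ => ?_
  rw [Finsupp.sum_single_index]
  · simp [Finsupp.smul_single, Nat.odd_iff]
  · simp

lemma assoc_single (a b c : ℕ) :
    tmul R τ (tmul R τ (single a (1:R)) (single b 1)) (single c 1)
      = tmul R τ (single a 1) (tmul R τ (single b 1) (single c 1)) := by
  simp only [tmul_single_single, one_mul, one_smul]
  split_ifs with h1 h2 h2 <;>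
    simp only [tmul_add_left, tmul_add_right, tmul_smul_left, tmul_smul_right,
      tmul_single_single, one_mul, one_smul, smul_add, smul_smul, Finsupp.smul_single] <;>
    simp only [Nat.odd_iff] at *
  all_goals split_ifs
  all_goals try (exfalso; omega)
  all_goals ring_nf
  all_goals simp [Finsupp.smul_single, smul_smul, smul_eq_mul, add_comm]
end aux2

/-- For `1 ≤ τ` (regarded in `R`), the twisted multiplication `tmul` is `R`-bilinear,
associative, and has `T^0` as a two-sided identity, so it makes `R[T]^τ` into an
associative unital `R`-algebra. -/
theorem tmul_assoc_one (R : Type) [CommRing R] (τ : ℕ) (hτ : 1 ≤ τ) :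
    (∀ f g h : ℕ →₀ R, tmul R (τ : R) (tmul R (τ : R) f g) h
        = tmul R (τ : R) f (tmul R (τ : R) g h)) ∧
    (∀ f : ℕ →₀ R, tmul R (τ : R) (Finsupp.single 0 (1 : R)) f = f) ∧
    (∀ f : ℕ →₀ R, tmul R (τ : R) f (Finsupp.single 0 (1 : R)) = f) ∧
    (∀ f g h : ℕ →₀ R, tmul R (τ : R) (f + g) h
        = tmul R (τ : R) f h + tmul R (τ : R) g h) ∧
    (∀ f g h : ℕ →₀ R, tmul R (τ : R) f (g + h)
        = tmul R (τ : R) f g + tmul R (τ : R) f h) ∧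
    (∀ (r : R) (f g : ℕ →₀ R), tmul R (τ : R) (r • f) g = r • tmul R (τ : R) f g) ∧
    (∀ (r : R) (f g : ℕ →₀ R), tmul R (τ : R) f (r • g) = r • tmul R (τ : R) f g) := by
  refine ⟨?_, tmul_one_left R _, tmul_one_right R _, tmul_add_left R _, tmul_add_right R _,
    tmul_smul_left R _, tmul_smul_right R _⟩
  intro f g h
  induction f using Finsupp.induction_linear with
  | zero => simp [tmul_zero_left]
  | add f1 f2 ih1 ih2 => simp [tmul_add_left, ih1, ih2]
  | single a r =>
    induction g using Finsupp.induction_linear with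
    | zero => simp [tmul_zero_left, tmul_zero_right]
    | add g1 g2 ih1 ih2 => simp [tmul_add_left, tmul_add_right, ih1, ih2]
    | single b s =>
      induction h using Finsupp.induction_linear with
      | zero => simp [tmul_zero_right]
      | add h1 h2 ih1 ih2 => simp [tmul_add_right, ih1, ih2]
      | single c t =>
        rw [show (single a r : ℕ →₀ R) = r • single a 1 by simp,
          show (single b s : ℕ →₀ R) = s • single b 1 by simp,
          show (single c t : ℕ →₀ R) = t • single c 1 by simp]
        simp only [tmul_smul_left, tmul_smul_right, assoc_single]
end

section
/- Let $R$ be a commutative ring and $\tau \in R$ a unit. Then the map sending $T \mapsto X$ and $T^2 \mapsto X^2/(X+\tau)$ extends to an $R$-algebra isomorphism $R[T]^\tau \cong R[X]_{(X+\tau)}$, where $R[T]^\tau$ is the twisted polynomial algebra with multiplication $T^a * T^b = \tau T^{a+b} + T^{a+b+1}$ if $a, b$ both odd and $T^a * T^b = T^{a+b}$ otherwise. -/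
open Polynomial Finsupp

section Aux
variable {R : Type} [CommRing R] (τ : R)

noncomputable def xx : Localization.Away (X + C τ : R[X]) := algebraMap R[X] _ X
noncomputable def yy : Localization.Away (X + C τ : R[X]) := algebraMap R[X] _ (X + C τ)
noncomputable def vv : Localization.Away (X + C τ : R[X]) := IsLocalization.Away.invSelf (X + C τ)
noncomputable def uu : Localization.Away (X + C τ : R[X]) := xx τ ^ 2 * vv τ

lemma yv : yy τ * vv τ = 1 := IsLocalization.Away.mul_invSelf _
lemma uy : uu τ * yy τ = xx τ ^ 2 := by
  rw [uu, mul_assoc, mul_comm (vv τ), yv, mul_one]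

lemma csmul (r : R) (z : Localization.Away (X + C τ : R[X])) :
    r • z = algebraMap R[X] _ (C r) * z := by
  rw [Algebra.smul_def, IsScalarTower.algebraMap_apply R R[X] (Localization.Away (X + C τ : R[X])),
    Polynomial.algebraMap_eq]

lemma y_eq : yy τ = xx τ + algebraMap R[X] _ (C τ) := by rw [yy, map_add]; rfl

noncomputable def bfun (a : ℕ) : Localization.Away (X + C τ : R[X]) :=
  xx τ ^ (a % 2) * uu τ ^ (a / 2)

lemma bfun_even (i : ℕ) : bfun τ (2 * i) = uu τ ^ i := by
  rw [bfun, Nat.mul_mod_right, Nat.mul_div_cancel_left _ (by norm_num), pow_zero, one_mul]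

lemma bfun_odd (i : ℕ) : bfun τ (2 * i + 1) = xx τ * uu τ ^ i := by
  have h1 : (2 * i + 1) % 2 = 1 := by omega
  have h2 : (2 * i + 1) / 2 = i := by omega
  rw [bfun, h1, h2, pow_one]

lemma bmul (a b : ℕ) : bfun τ a * bfun τ b =
    if Odd a ∧ Odd b then τ • bfun τ (a + b) + bfun τ (a + b + 1) else bfun τ (a + b) := by
  rcases Nat.even_or_odd a with ⟨i, rfl⟩ | ⟨i, rfl⟩ <;>
    rcases Nat.even_or_odd b with ⟨j, rfl⟩ | ⟨j, rfl⟩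
  · rw [if_neg (by rintro ⟨⟨k, hk⟩, -⟩; omega), show i + i = 2 * i by ring,
      show j + j = 2 * j by ring, show 2 * i + 2 * j = 2 * (i + j) by ring,
      bfun_even, bfun_even, bfun_even, pow_add]
  · rw [if_neg (by rintro ⟨⟨k, hk⟩, -⟩; omega), show i + i = 2 * i by ring,
      show 2 * i + (2 * j + 1) = 2 * (i + j) + 1 by ring, bfun_even, bfun_odd, bfun_odd, pow_add]
    ring
  · rw [if_neg (by rintro ⟨-, ⟨k, hk⟩⟩; omega), show j + j = 2 * j by ring,
      show 2 * i + 1 + 2 * j = 2 * (i + j) + 1 by ring, bfun_even, bfun_odd, bfun_odd, pow_add]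
    ring
  · rw [if_pos ⟨⟨i, rfl⟩, ⟨j, rfl⟩⟩, show 2 * i + 1 + (2 * j + 1) = 2 * (i + j + 1) by ring,
      bfun_odd, bfun_odd, bfun_even, show 2 * (i + j + 1) + 1 = 2 * (i + j + 1) + 1 from rfl,
      bfun_odd, csmul]
    have huy : uu τ * (xx τ + algebraMap R[X] _ (C τ)) = xx τ ^ 2 := by rw [← y_eq]; exact uy τ
    have : (i + j + 1) = (i + j) + 1 := rfl
    rw [this, pow_succ]
    linear_combination (-(uu τ ^ (i + j))) * huy

noncomputable def ee : (ℕ →₀ R) →ₗ[R] Localization.Away (X + C τ : R[X]) :=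
  Finsupp.linearCombination R (bfun τ)

lemma ee_single (n : ℕ) (r : R) : ee τ (Finsupp.single n r) = r • bfun τ n :=
  Finsupp.linearCombination_single _ _ _
end Aux

section Aux2
variable {R : Type} [CommRing R] (τ : R)

lemma ee_blob (a b : ℕ) :
    ee τ (if Odd a ∧ Odd b then
        τ • Finsupp.single (a + b) (1 : R) + Finsupp.single (a + b + 1) (1 : R)
      else Finsupp.single (a + b) (1 : R)) = bfun τ a * bfun τ b := by
  rw [bmul]
  split_ifs with h
  · rw [map_add, map_smul, ee_single, ee_single, one_smul, one_smul]
  · rw [ee_single, one_smul]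

lemma ee_mul (f g : ℕ →₀ R) : ee τ (tmul R τ f g) = ee τ f * ee τ g := by
  rw [tmul, map_finsuppSum,
    show ee τ f = f.sum fun a r => r • bfun τ a from Finsupp.linearCombination_apply _ _,
    Finsupp.sum_mul]
  refine Finsupp.sum_congr fun a _ => ?_
  rw [map_finsuppSum,
    show ee τ g = g.sum fun b r => r • bfun τ b from Finsupp.linearCombination_apply _ _,
    Finsupp.mul_sum]
  refine Finsupp.sum_congr fun b _ => ?_
  rw [map_smul, ee_blob, smul_mul_assoc, mul_smul_comm, smul_smul]

lemma yy_pow_mul_bfun {a N : ℕ} (h : a / 2 ≤ N) :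
    yy τ ^ N * bfun τ a = xx τ ^ a * yy τ ^ (N - a / 2) := by
  have huy : ∀ k : ℕ, uu τ ^ k * yy τ ^ k = xx τ ^ (2 * k) := by
    intro k
    rw [← mul_pow, uy, ← pow_mul, mul_comm 2 k]
  rw [bfun, show yy τ ^ N = yy τ ^ (a / 2) * yy τ ^ (N - a / 2) by
    rw [← pow_add]; congr 1; omega]
  calc yy τ ^ (a / 2) * yy τ ^ (N - a / 2) * (xx τ ^ (a % 2) * uu τ ^ (a / 2))
      = xx τ ^ (a % 2) * (uu τ ^ (a / 2) * yy τ ^ (a / 2)) * yy τ ^ (N - a / 2) := by ring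
    _ = xx τ ^ (a % 2) * xx τ ^ (2 * (a / 2)) * yy τ ^ (N - a / 2) := by rw [huy]
    _ = xx τ ^ a * yy τ ^ (N - a / 2) := by rw [← pow_add]; congr 2; omega

lemma ee_inj (hτ : IsUnit τ) : Function.Injective (ee τ (R := R)) := by
  rw [← LinearMap.ker_eq_bot, LinearMap.ker_eq_bot']
  intro f hf
  by_contra hne
  have hsupp : f.support.Nonempty := Finsupp.support_nonempty_iff.2 hne
  set N := f.support.sup id / 2 + 1 with hN
  set P : R[X] := f.sum fun a r => C r * (X ^ a * (X + C τ) ^ (N - a / 2)) with hPdef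
  have hP : algebraMap R[X] (Localization.Away (X + C τ : R[X])) P = yy τ ^ N * ee τ f := by
    rw [hPdef, map_finsuppSum,
      show ee τ f = f.sum fun a r => r • bfun τ a from Finsupp.linearCombination_apply _ _,
      Finsupp.mul_sum]
    refine Finsupp.sum_congr fun a ha => ?_
    have hda : a / 2 ≤ N := by
      have := Finset.le_sup (f := id) ha
      simp only [id] at this
      omega
    rw [mul_smul_comm, yy_pow_mul_bfun τ hda, csmul, map_mul, map_mul, map_pow, map_pow]
    rfl
  rw [hf, mul_zero] at hP
  have hsub : Submonoid.powers (X + C τ : R[X]) ≤ nonZeroDivisors R[X] := by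
    rintro _ ⟨n, rfl⟩
    exact ((monic_X_add_C τ).pow n).mem_nonZeroDivisors
  have hP0 : P = 0 := IsLocalization.injective _ hsub (by rw [hP, map_zero])
  set a0 := f.support.min' hsupp with ha0
  have h0 : P.coeff a0 = 0 := by rw [hP0, coeff_zero]
  have hc : P.coeff a0 = f a0 * τ ^ (N - a0 / 2) := by
    rw [hPdef, Finsupp.sum, finset_sum_coeff]
    rw [Finset.sum_eq_single a0]
    · rw [coeff_C_mul]
      congr 1
      have h1 := coeff_X_pow_mul ((X + C τ : R[X]) ^ (N - a0 / 2)) a0 0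
      rw [zero_add] at h1
      rw [h1, coeff_zero_eq_eval_zero]
      simp
    · intro b hb hne'
      have hlt : a0 < b := lt_of_le_of_ne (f.support.min'_le b hb) (Ne.symm hne')
      rw [coeff_C_mul, mul_comm ((X : R[X]) ^ b), coeff_mul_X_pow', if_neg (by omega), mul_zero]
    · intro h
      exact absurd (f.support.min'_mem hsupp) h
  rw [hc] at h0
  have : f a0 = 0 := ((hτ.pow (N - a0 / 2)).mul_left_eq_zero).1 h0
  exact (Finsupp.mem_support_iff.1 (f.support.min'_mem hsupp)) this

end Aux2

section Aux3
variable {R : Type} [CommRing R] (τ : R)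

lemma ee_surj (hτ : IsUnit τ) : Function.Surjective (ee τ (R := R)) := by
  rw [← LinearMap.range_eq_top, ee, Finsupp.range_linearCombination, eq_top_iff]
  set S := Submodule.span R (Set.range (bfun τ)) with hS
  have hb : ∀ n, bfun τ n ∈ S := fun n => Submodule.subset_span ⟨n, rfl⟩
  have hmul : ∀ z1 z2 : Localization.Away (X + C τ : R[X]),
      z1 ∈ S → z2 ∈ S → z1 * z2 ∈ S := by
    intro z1 z2 h1 h2
    induction h1, h2 using Submodule.span_induction₂ with
    | mem_mem x y hx hy =>
      obtain ⟨m, rfl⟩ := hx; obtain ⟨n, rfl⟩ := hy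
      rw [bmul]
      split_ifs
      · exact add_mem (Submodule.smul_mem _ _ (hb _)) (hb _)
      · exact hb _
    | zero_left y hy => rw [zero_mul]; exact zero_mem _
    | zero_right x hx => rw [mul_zero]; exact zero_mem _
    | add_left x y z hx hy hz h1 h2 => rw [add_mul]; exact add_mem h1 h2
    | add_right x y z hx hy hz h1 h2 => rw [mul_add]; exact add_mem h1 h2
    | smul_left r x y hx hy h => rw [smul_mul_assoc]; exact Submodule.smul_mem _ _ h
    | smul_right r x y hx hy h => rw [mul_smul_comm]; exact Submodule.smul_mem _ _ h
  have h1 : (1 : Localization.Away (X + C τ : R[X])) ∈ S := by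
    have := hb 0; rwa [bfun, pow_zero, pow_zero, one_mul] at this
  have hx : xx τ ∈ S := by
    have := hb 1
    rwa [bfun, show (1 : ℕ) % 2 = 1 from rfl, show (1 : ℕ) / 2 = 0 from rfl, pow_one, pow_zero,
      mul_one] at this
  have hu : uu τ ∈ S := by
    have := hb 2
    rwa [bfun, show (2 : ℕ) % 2 = 0 from rfl, show (2 : ℕ) / 2 = 1 from rfl, pow_zero, pow_one,
      one_mul] at this
  have hv : vv τ ∈ S := by
    have key : (τ * τ) • vv τ = uu τ - xx τ + τ • 1 := by
      have huy : uu τ * (xx τ + algebraMap R[X] _ (C τ)) = xx τ ^ 2 := by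
        rw [← y_eq]; exact uy τ
      have h2 : (uu τ - xx τ + τ • 1) * yy τ = (τ * τ) • (1 : Localization.Away (X + C τ : R[X])) := by
        rw [y_eq, csmul, csmul, C_mul, map_mul]
        linear_combination huy
      have := congrArg (· * vv τ) h2
      simp only [mul_assoc, yv, mul_one, smul_mul_assoc, one_mul] at this
      exact this.symm
    obtain ⟨w, hw⟩ := hτ
    have hvv : vv τ = ((w⁻¹ : Rˣ) * (w⁻¹ : Rˣ) : R) • (uu τ - xx τ + τ • 1) := by
      rw [← key, smul_smul]
      rw [show ((w⁻¹ : Rˣ) * (w⁻¹ : Rˣ) : R) * (τ * τ) = ((w⁻¹ : Rˣ) * τ) * ((w⁻¹ : Rˣ) * τ) by ring,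
        ← hw, Units.inv_mul, one_mul, one_smul]
    rw [hvv]
    exact Submodule.smul_mem _ _ (add_mem (sub_mem hu hx) (Submodule.smul_mem _ _ h1))
  have hxp : ∀ k : ℕ, xx τ ^ k ∈ S := by
    intro k
    induction k with
    | zero => rw [pow_zero]; exact h1
    | succ n ih => rw [pow_succ]; exact hmul _ _ ih hx
  have hvp : ∀ n : ℕ, vv τ ^ n ∈ S := by
    intro n
    induction n with
    | zero => rw [pow_zero]; exact h1
    | succ n ih => rw [pow_succ]; exact hmul _ _ ih hv
  have halg : ∀ p : R[X], algebraMap R[X] (Localization.Away (X + C τ : R[X])) p ∈ S := by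
    intro p
    rw [← p.sum_C_mul_X_pow_eq, Polynomial.sum, map_sum]
    refine Submodule.sum_mem _ fun k _ => ?_
    rw [map_mul, map_pow, ← csmul]
    exact Submodule.smul_mem _ _ (hxp k)
  rintro z -
  obtain ⟨p, s, hz⟩ := IsLocalization.exists_mk'_eq (Submonoid.powers (X + C τ : R[X])) z
  obtain ⟨n, hn⟩ := s.2
  have hn' : (X + C τ : R[X]) ^ n = ↑s := hn
  have hspec : z * yy τ ^ n = algebraMap R[X] (Localization.Away (X + C τ : R[X])) p := by
    rw [yy, ← map_pow, hn', ← hz]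
    exact IsLocalization.mk'_spec _ _ _
  have hz2 : z = algebraMap R[X] (Localization.Away (X + C τ : R[X])) p * vv τ ^ n := by
    have hyv : yy τ ^ n * vv τ ^ n = 1 := by rw [← mul_pow, yv, one_pow]
    calc z = z * (yy τ ^ n * vv τ ^ n) := by rw [hyv, mul_one]
      _ = (z * yy τ ^ n) * vv τ ^ n := by ring
      _ = _ := by rw [hspec]
  rw [hz2]
  exact hmul _ _ (halg p) (hvp n)

end Aux3


/-- For a unit `τ`, the assignment `T ↦ X`, `T² ↦ X²/(X+τ)` extends to an `R`-algebra
isomorphism `R[T]^τ ≅ R[X]_{(X+τ)}`. -/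
theorem twisted_iso_localization (R : Type) [CommRing R] (τ : R) (hτ : IsUnit τ) :
    ∃ e : (ℕ →₀ R) ≃ₗ[R] Localization.Away (Polynomial.X + Polynomial.C τ),
      (∀ f g : ℕ →₀ R, e (tmul R τ f g) = e f * e g) ∧
      e (Finsupp.single 0 1) = 1 ∧
      e (Finsupp.single 1 1) =
        algebraMap R[X] (Localization.Away (Polynomial.X + Polynomial.C τ)) Polynomial.X ∧
      e (Finsupp.single 2 1) =
        IsLocalization.mk' (Localization.Away (Polynomial.X + Polynomial.C τ))
          (Polynomial.X ^ 2)
          (⟨Polynomial.X + Polynomial.C τ,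
            Submonoid.mem_powers (Polynomial.X + Polynomial.C τ)⟩ :
              Submonoid.powers (Polynomial.X + Polynomial.C τ)) := by
  refine ⟨LinearEquiv.ofBijective (ee τ) (show Function.Bijective (ee τ) from ⟨ee_inj τ hτ, ee_surj τ hτ⟩), ?_, ?_, ?_, ?_⟩
  · intro f g
    simp only [LinearEquiv.ofBijective_apply]
    exact ee_mul τ f g
  · rw [LinearEquiv.ofBijective_apply, ee_single, one_smul, bfun, pow_zero, pow_zero, one_mul]
  · rw [LinearEquiv.ofBijective_apply, ee_single, one_smul, bfun,
      show (1 : ℕ) % 2 = 1 from rfl, show (1 : ℕ) / 2 = 0 from rfl, pow_one, pow_zero, mul_one]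
    rfl
  · rw [LinearEquiv.ofBijective_apply, ee_single, one_smul, bfun,
      show (2 : ℕ) % 2 = 0 from rfl, show (2 : ℕ) / 2 = 1 from rfl, pow_zero, pow_one, one_mul]
    rw [IsLocalization.eq_mk'_iff_mul_eq]
    rw [map_pow]
    exact uy τ
end

section
/- Let $R$ be a commutative ring, $S$ a commutative $R$-algebra, $A$ an $R$-algebra and $B$ an $S$-algebra. Suppose given a twisting map $\psi_1 : S \otimes_R A \to A \otimes_R S$ over $R$ making $C := A \otimes_R^{\psi_1} S$ an associative unital $S$-algebra, and a twisting map $\psi_2 : B \otimes_S C \to C \otimes_S B$ over $S$. Define $\psi_3 = \gamma \circ \psi_2 \circ (\mathrm{id}_B \otimes \iota_A) : B \otimes_R A \to A \otimes_R B$, where $\iota_A(a) = a \otimes 1_S$ and $\gamma(\sum_i a_i \otimes s_i \otimes b_i) = \sum_i a_i \otimes s_i b_i$. Then the $R$-linear map $f : A \otimes_R B \to C \otimes_S B$, $a \otimes b \mapsto (a \otimes 1_S) \otimes b$, is an isomorphism of $R$-modules intertwining the multiplications $\mu_{\psi_3}$ and $\mu_{\psi_2}$, i.e. $A \otimes_R^{\psi_3}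 B \cong (A \otimes_R^{\psi_1} S) \otimes_S^{\psi_2} B$ as $R$-algebras. -/
open TensorProduct

attribute [local instance] Algebra.TensorProduct.rightAlgebra

/-- Iterated twisted tensor products: given a twisting map `ψ₁ : S ⊗ A → A ⊗ S` over `R`
making `C = A ⊗_R^{ψ₁} S` (multiplication `μ₁`) an associative unital `S`-algebra, and a
twisting map `ψ₂ : B ⊗ C → C ⊗ B` over `S` (multiplication `μ₂` on `C ⊗_S B`), the map
`f : a ⊗ b ↦ (a ⊗ 1) ⊗ b` is an isomorphism `A ⊗_R^{ψ₃} B ≅ (A ⊗_R^{ψ₁} S) ⊗_S^{ψ₂} B`,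
where `ψ₃ = γ ∘ ψ₂ ∘ (id_B ⊗ ι_A)` with `ι_A(a) = a ⊗ 1` and `γ(a ⊗ s ⊗ b) = a ⊗ s•b`. -/
theorem iterated_twisted_tensor
    (R S A B : Type) [CommRing R] [CommRing S] [Algebra R S]
    [Ring A] [Algebra R A] [Ring B] [Algebra R B] [Algebra S B] [IsScalarTower R S B]
    -- the twisting map ψ₁ over R
    (ψ₁ : S ⊗[R] A →ₗ[R] A ⊗[R] S)
    (hψ₁a : ∀ a : A, ψ₁ ((1 : S) ⊗ₜ[R] a) = a ⊗ₜ[R] (1 : S))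
    (hψ₁s : ∀ s : S, ψ₁ (s ⊗ₜ[R] (1 : A)) = (1 : A) ⊗ₜ[R] s)
    -- the twisted multiplication μ₁ on C = A ⊗[R] S, S-bilinear
    (μ₁ : (A ⊗[R] S) →ₗ[S] (A ⊗[R] S) →ₗ[S] (A ⊗[R] S))
    (hμ₁ : ∀ (a₁ a₂ : A) (s₁ s₂ : S),
      μ₁ (a₁ ⊗ₜ[R] s₁) (a₂ ⊗ₜ[R] s₂) =
        TensorProduct.map (LinearMap.mulLeft R a₁) (LinearMap.mulRight R s₂)
          (ψ₁ (s₁ ⊗ₜ[R] a₂)))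
    (hμ₁assoc : ∀ x y z : A ⊗[R] S, μ₁ (μ₁ x y) z = μ₁ x (μ₁ y z))
    (hμ₁one : ∀ x : A ⊗[R] S,
      μ₁ ((1 : A) ⊗ₜ[R] (1 : S)) x = x ∧ μ₁ x ((1 : A) ⊗ₜ[R] (1 : S)) = x)
    -- the twisting map ψ₂ over S
    (ψ₂ : B ⊗[S] (A ⊗[R] S) →ₗ[S] (A ⊗[R] S) ⊗[S] B)
    (hψ₂c : ∀ c : A ⊗[R] S, ψ₂ ((1 : B) ⊗ₜ[S] c) = c ⊗ₜ[S] (1 : B))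
    (hψ₂b : ∀ b : B,
      ψ₂ (b ⊗ₜ[S] ((1 : A) ⊗ₜ[R] (1 : S))) = ((1 : A) ⊗ₜ[R] (1 : S)) ⊗ₜ[S] b)
    -- the twisted multiplication μ₂ on C ⊗[S] B
    (μ₂ : ((A ⊗[R] S) ⊗[S] B) →ₗ[S] ((A ⊗[R] S) ⊗[S] B) →ₗ[S] ((A ⊗[R] S) ⊗[S] B))
    (hμ₂ : ∀ (c₁ c₂ : A ⊗[R] S) (b₁ b₂ : B),
      μ₂ (c₁ ⊗ₜ[S] b₁) (c₂ ⊗ₜ[S] b₂) =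
        TensorProduct.map (μ₁ c₁) (LinearMap.mulRight S b₂) (ψ₂ (b₁ ⊗ₜ[S] c₂)))
    -- the contraction γ and the induced twisting map ψ₃ over R
    (γ : ((A ⊗[R] S) ⊗[S] B) →+ (A ⊗[R] B))
    (hγ : ∀ (a : A) (s : S) (b : B), γ ((a ⊗ₜ[R] s) ⊗ₜ[S] b) = a ⊗ₜ[R] (s • b))
    (ψ₃ : B ⊗[R] A →ₗ[R] A ⊗[R] B)
    (hψ₃ : ∀ (b : B) (a : A),
      ψ₃ (b ⊗ₜ[R] a) = γ (ψ₂ (b ⊗ₜ[S] (a ⊗ₜ[R] (1 : S)))))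
    -- the twisted multiplication μ₃ on A ⊗[R] B
    (μ₃ : (A ⊗[R] B) →ₗ[R] (A ⊗[R] B) →ₗ[R] (A ⊗[R] B))
    (hμ₃ : ∀ (a₁ a₂ : A) (b₁ b₂ : B),
      μ₃ (a₁ ⊗ₜ[R] b₁) (a₂ ⊗ₜ[R] b₂) =
        TensorProduct.map (LinearMap.mulLeft R a₁) (LinearMap.mulRight R b₂)
          (ψ₃ (b₁ ⊗ₜ[R] a₂))) :
    ∃ f : (A ⊗[R] B) ≃+ ((A ⊗[R] S) ⊗[S] B),
      (∀ (a : A) (b : B), f (a ⊗ₜ[R] b) = ((a ⊗ₜ[R] (1 : S)) ⊗ₜ[S] b)) ∧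
      (∀ (r : R) (x : A ⊗[R] B), f (r • x) = algebraMap R S r • f x) ∧
      (∀ x y : A ⊗[R] B, f (μ₃ x y) = μ₂ (f x) (f y)) := by
  classical
  -- smul computation in A ⊗[R] S with the right algebra structure
  have hsmul : ∀ (s s' : S) (a : A), s • (a ⊗ₜ[R] s') = a ⊗ₜ[R] (s * s') := by
    intro s s' a
    rw [Algebra.smul_def]
    show ((1 : A) ⊗ₜ[R] s) * (a ⊗ₜ[R] s') = _
    rw [Algebra.TensorProduct.tmul_mul_tmul, one_mul]
  -- the forward map
  let Fb : A →ₗ[R] B →ₗ[R] ((A ⊗[R] S) ⊗[S] B) :=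
    LinearMap.mk₂ R (fun a b => (a ⊗ₜ[R] (1 : S)) ⊗ₜ[S] b)
      (fun a a' b => by rw [add_tmul, add_tmul])
      (fun r a b => by rw [smul_tmul', smul_tmul'])
      (fun a b b' => by rw [tmul_add])
      (fun r a b => by
        rw [smul_tmul', smul_tmul', ← algebraMap_smul S r b, ← smul_tmul, hsmul,
          mul_one, smul_tmul, Algebra.smul_def, mul_one])
  let F : (A ⊗[R] B) →ₗ[R] ((A ⊗[R] S) ⊗[S] B) := TensorProduct.lift Fb
  have hF : ∀ (a : A) (b : B), F (a ⊗ₜ[R] b) = (a ⊗ₜ[R] (1 : S)) ⊗ₜ[S] b := fun a b => rfl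
  have hγF : ∀ x : A ⊗[R] B, γ (F x) = x := by
    intro x
    induction x using TensorProduct.induction_on with
    | zero => simp
    | tmul a b => rw [hF, hγ, one_smul]
    | add x y hx hy => rw [map_add, map_add, hx, hy]
  have hFγ : ∀ y : (A ⊗[R] S) ⊗[S] B, F (γ y) = y := by
    intro y
    induction y using TensorProduct.induction_on with
    | zero => simp
    | tmul c b =>
      induction c using TensorProduct.induction_on with
      | zero => simp [zero_tmul]
      | tmul a s =>
        rw [hγ, hF, ← smul_tmul, hsmul, mul_one]
      | add c₁ c₂ h₁ h₂ =>
        rw [add_tmul, map_add, map_add, h₁, h₂]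
    | add x y hx hy => rw [map_add, map_add, hx, hy]
  let f : (A ⊗[R] B) ≃+ ((A ⊗[R] S) ⊗[S] B) :=
    { toFun := F
      invFun := γ
      left_inv := hγF
      right_inv := hFγ
      map_add' := F.map_add }
  refine ⟨f, fun a b => hF a b, ?_, ?_⟩
  · intro r x
    show F (r • x) = algebraMap R S r • F x
    rw [F.map_smul, algebraMap_smul]
  · intro x y
    show F (μ₃ x y) = μ₂ (F x) (F y)
    induction x using TensorProduct.induction_on with
    | zero => simp
    | add x₁ x₂ h₁ h₂ => simp only [map_add, LinearMap.add_apply, h₁, h₂]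
    | tmul a₁ b₁ =>
      induction y using TensorProduct.induction_on with
      | zero => simp
      | add y₁ y₂ h₁ h₂ => simp only [map_add, h₁, h₂]
      | tmul a₂ b₂ =>
        rw [hμ₃, hψ₃, hF, hF, hμ₂]
        generalize ψ₂ (b₁ ⊗ₜ[S] (a₂ ⊗ₜ[R] (1 : S))) = t
        induction t using TensorProduct.induction_on with
        | zero => simp
        | add t₁ t₂ h₁ h₂ => rw [map_add, map_add, map_add, map_add, h₁, h₂]
        | tmul c b =>
          induction c using TensorProduct.induction_on with
          | zero => simp [zero_tmul]
          | add c₁ c₂ h₁ h₂ =>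
            rw [add_tmul, map_add, map_add, map_add, map_add, h₁, h₂]
          | tmul a s =>
            rw [hγ, map_tmul, map_tmul, hF, hμ₁, hψ₁a, map_tmul]
            simp only [LinearMap.mulLeft_apply, LinearMap.mulRight_apply, one_mul]
            rw [smul_mul_assoc, ← smul_tmul, hsmul, mul_one]
end
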